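/- arXiv:2212.04596 — 2 statements merged into one kernel-verified Lean document; each statement's English description precedes it below -/
import Mathlib

section
/- Any two patterns p1 and p2 have a least upper bound (anti-unifier) p1 ⊔ p2 with respect to the generality order ⊑: a pattern matching both p1 and p2 that is matched by every other pattern matching both; moreover this join is unique up to variable renaming. -/
/-! STATEMENT 3: Any two patterns have a least upper bound (anti-unifier)
with respect to the generality order ⊑, unique up to variable renaming. -/

/-- Patterns: terms over constructors from `S` that may contain variables from `V`. -/
inductive Pat (S V : Type) : Type where
  | var : V → Pat S V
  | con : S → List (Pat S V) → Pat S V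

namespace Pat

variable {S V : Type}

/-- Applying a substitution (a total map from variables to patterns) structurally. -/
def subst (σ : V → Pat S V) : Pat S V → Pat S V
  | .var x => σ x
  | .con s args => .con s (args.attach.map (fun a => subst σ a.1))
  decreasing_by
  all_goals simp_wf
  all_goals (try have h := List.sizeOf_lt_of_mem a.2)
  all_goals omega

/-- Generality order: `p' ⊑ p` iff `p'` is an instance of `p`. -/
def le (p' p : Pat S V) : Prop := ∃ σ : V → Pat S V, p' = p.subst σ

/-- Equivalence up to variable renaming. -/
def equiv (p q : Pat S V) : Prop := le p q ∧ le q p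

theorem subst_var (σ : V → Pat S V) (x : V) : subst σ (.var x) = σ x := by
  rw [subst]

theorem subst_con (σ : V → Pat S V) (s : S) (args : List (Pat S V)) :
    subst σ (.con s args) = .con s (args.map (subst σ)) := by
  rw [subst]; simp [List.attach_map_val]

theorem myInd (motive : Pat S V → Prop) (hv : ∀ x, motive (.var x))
    (hc : ∀ s args, (∀ a ∈ args, motive a) → motive (.con s args)) :
    ∀ p, motive p
  | .var x => hv x
  | .con s args => hc s args (fun a ha => myInd motive hv hc a)
  decreasing_by
  all_goals simp_wf
  all_goals (try have h := List.sizeOf_lt_of_mem ha)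
  all_goals omega

open Classical in
noncomputable def au (name : Pat S V → Pat S V → V) : Pat S V → Pat S V → Pat S V
  | .con s as, .con t bs =>
      if s = t ∧ as.length = bs.length then
        .con s (((as.zip bs).attach).map (fun x => au name x.1.1 x.1.2))
      else .var (name (.con s as) (.con t bs))
  | a, b => .var (name a b)
  termination_by a b => sizeOf a
  decreasing_by
  all_goals simp_wf
  all_goals obtain ⟨⟨a', b'⟩, hm⟩ := x
  all_goals have h := List.sizeOf_lt_of_mem (List.of_mem_zip hm).1
  all_goals simp at h ⊢
  all_goals omega

open Classical in
theorem au_con_con (name : Pat S V → Pat S V → V) (s t : S) (as bs : List (Pat S V)) :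
    au name (.con s as) (.con t bs) =
      if s = t ∧ as.length = bs.length then
        .con s ((as.zip bs).map (fun x => au name x.1 x.2))
      else .var (name (.con s as) (.con t bs)) := by
  rw [au.eq_def]; simp [List.attach_map_val (f := fun x : Pat S V × Pat S V => au name x.1 x.2)]

theorem au_var_left (name : Pat S V → Pat S V → V) (x : V) (b : Pat S V) :
    au name (.var x) b = .var (name (.var x) b) := by
  cases b <;> rw [au.eq_def]

theorem au_con_var (name : Pat S V → Pat S V → V) (s : S) (as : List (Pat S V)) (y : V) :
    au name (.con s as) (.var y) = .var (name (.con s as) (.var y)) := by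
  rw [au.eq_def]


def subs : Pat S V → List (Pat S V)
  | .var x => [.var x]
  | .con s args => .con s args :: args.attach.flatMap (fun a => subs a.1)
  decreasing_by
  all_goals simp_wf
  all_goals (try have h := List.sizeOf_lt_of_mem a.2)
  all_goals omega

theorem mem_subs_self (p : Pat S V) : p ∈ subs p := by
  cases p <;> rw [subs] <;> simp

theorem subs_child {s : S} {args : List (Pat S V)} {a : Pat S V} (ha : a ∈ args) :
    subs a ⊆ subs (.con s args) := by
  intro q hq
  rw [subs]
  right
  exact List.mem_flatMap.mpr ⟨⟨a, ha⟩, by simp, hq⟩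

theorem subs_trans : ∀ p : Pat S V, ∀ q ∈ subs p, subs q ⊆ subs p := by
  refine myInd _ ?_ ?_
  · intro x q hq
    rw [subs] at hq; simp at hq; subst hq; intro r hr; exact hr
  · intro s args ih q hq
    rw [subs] at hq
    rcases List.mem_cons.1 hq with h | h
    · subst h; intro r hr; exact hr
    · rw [List.mem_flatMap] at h
      obtain ⟨a, _, hqa⟩ := h
      exact List.Subset.trans (ih a.1 a.2 q hqa) (subs_child a.2)

theorem mem_subs_of_con {p : Pat S V} {s : S} {args : List (Pat S V)}
    (h : Pat.con s args ∈ subs p) {a : Pat S V} (ha : a ∈ args) : a ∈ subs p :=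
  subs_trans p _ h ((subs_child ha) (mem_subs_self a))

/-- `au name a b` is a substitution instance of any common generalization. -/
theorem au_subst (name : Pat S V → Pat S V → V) (σ₁ σ₂ : V → Pat S V) :
    ∀ q : Pat S V, au name (subst σ₁ q) (subst σ₂ q)
      = subst (fun v => au name (σ₁ v) (σ₂ v)) q := by
  refine myInd _ ?_ ?_
  · intro x
    rw [subst_var, subst_var, subst_var]
  · intro s args ih
    rw [subst_con, subst_con, subst_con, au_con_con]
    rw [if_pos ⟨rfl, by simp⟩]
    congr 1
    rw [List.zip_map']
    rw [List.map_map]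
    exact List.map_congr_left (fun a ha => ih a ha)

/-- Substituting back the left components. -/
theorem subst_au_left (name : Pat S V → Pat S V → V) (σ : V → Pat S V)
    (A B : List (Pat S V))
    (hA : ∀ (s : S) (args : List (Pat S V)), Pat.con s args ∈ A → ∀ a ∈ args, a ∈ A)
    (hB : ∀ (s : S) (args : List (Pat S V)), Pat.con s args ∈ B → ∀ b ∈ args, b ∈ B)
    (hσ : ∀ a b, a ∈ A → b ∈ B → σ (name a b) = a) :
    ∀ a, a ∈ A → ∀ b ∈ B, subst σ (au name a b) = a := by
  refine myInd (fun a => a ∈ A → ∀ b ∈ B, subst σ (au name a b) = a) ?_ ?_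
  · intro x hx b hb
    rw [au_var_left, subst_var, hσ _ _ hx hb]
  · intro s as ih hmem b hb
    cases b with
    | var y => rw [au_con_var, subst_var, hσ _ _ hmem hb]
    | con t bs =>
      rw [au_con_con]
      by_cases hc : s = t ∧ as.length = bs.length
      · rw [if_pos hc, subst_con, List.map_map]
        congr 1
        have h1 : ∀ x ∈ as.zip bs, subst σ (au name x.1 x.2) = x.1 := by
          intro x hx
          have h1 := (List.of_mem_zip hx).1
          have h2 := (List.of_mem_zip hx).2
          exact ih x.1 h1 (hA s as hmem x.1 h1) x.2 (hB t bs hb x.2 h2)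
        simp only [Function.comp_def]
        rw [List.map_congr_left h1, List.map_fst_zip (le_of_eq hc.2)]
      · rw [if_neg hc, subst_var, hσ _ _ hmem hb]

/-- Substituting back the right components. -/
theorem subst_au_right (name : Pat S V → Pat S V → V) (σ : V → Pat S V)
    (A B : List (Pat S V))
    (hA : ∀ (s : S) (args : List (Pat S V)), Pat.con s args ∈ A → ∀ a ∈ args, a ∈ A)
    (hB : ∀ (s : S) (args : List (Pat S V)), Pat.con s args ∈ B → ∀ b ∈ args, b ∈ B)
    (hσ : ∀ a b, a ∈ A → b ∈ B → σ (name a b) = b) :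
    ∀ a, a ∈ A → ∀ b ∈ B, subst σ (au name a b) = b := by
  refine myInd (fun a => a ∈ A → ∀ b ∈ B, subst σ (au name a b) = b) ?_ ?_
  · intro x hx b hb
    rw [au_var_left, subst_var, hσ _ _ hx hb]
  · intro s as ih hmem b hb
    cases b with
    | var y => rw [au_con_var, subst_var, hσ _ _ hmem hb]
    | con t bs =>
      rw [au_con_con]
      by_cases hc : s = t ∧ as.length = bs.length
      · rw [if_pos hc, subst_con, List.map_map]
        rw [hc.1]
        congr 1
        have h1 : ∀ x ∈ as.zip bs, subst σ (au name x.1 x.2) = x.2 := by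
          intro x hx
          have h1 := (List.of_mem_zip hx).1
          have h2 := (List.of_mem_zip hx).2
          exact ih x.1 h1 (hA s as hmem x.1 h1) x.2 (hB t bs hb x.2 h2)
        simp only [Function.comp_def]
        rw [List.map_congr_left h1, List.map_snd_zip (ge_of_eq hc.2)]
      · rw [if_neg hc, subst_var, hσ _ _ hmem hb]

end Pat

/-- Any two patterns `p₁`, `p₂` (over an infinite supply of variables) have an
anti-unifier `j`: a pattern matching both that is matched by every other pattern
matching both; moreover `j` is unique up to variable renaming. -/
theorem pattern_anti_unifier_exists_unique
    {S V : Type} [Infinite V] (p₁ p₂ : Pat S V) :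
    ∃ j : Pat S V,
      (Pat.le p₁ j ∧ Pat.le p₂ j ∧
        ∀ q : Pat S V, Pat.le p₁ q → Pat.le p₂ q → Pat.le j q) ∧
      (∀ j' : Pat S V,
        (Pat.le p₁ j' ∧ Pat.le p₂ j' ∧
          ∀ q : Pat S V, Pat.le p₁ q → Pat.le p₂ q → Pat.le j' q) →
        Pat.equiv j j') := by
  letI : DecidableEq (Pat S V × Pat S V) := Classical.decEq _
  letI : BEq (Pat S V × Pat S V) := instBEqOfDecidableEq
  classical
  set A := Pat.subs p₁ with hAdef
  set B := Pat.subs p₂ with hBdef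
  set L : List (Pat S V × Pat S V) := A.product B with hLdef
  set g : ℕ ↪ V := Infinite.natEmbedding V with hgdef
  set name : Pat S V → Pat S V → V := fun a b => g (L.idxOf (a, b)) with hname
  -- injectivity of `name` on pairs from L
  have hinj : ∀ a b a' b', (a, b) ∈ L → (a', b') ∈ L →
      name a b = name a' b' → a = a' ∧ b = b' := by
    intro a b a' b' h1 h2 he
    have : L.idxOf (a, b) = L.idxOf (a', b') := g.injective he
    have := (List.idxOf_inj h1).1 this
    exact ⟨congrArg Prod.fst this, congrArg Prod.snd this⟩
  have hA : ∀ (s : S) (args : List (Pat S V)), Pat.con s args ∈ A → ∀ a ∈ args, a ∈ A :=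
    fun s args h a ha => Pat.mem_subs_of_con h ha
  have hB : ∀ (s : S) (args : List (Pat S V)), Pat.con s args ∈ B → ∀ b ∈ args, b ∈ B :=
    fun s args h b hb => Pat.mem_subs_of_con h hb
  have hle1 : Pat.le p₁ (Pat.au name p₁ p₂) := by
    set σ : V → Pat S V := fun v =>
      if h : ∃ pr : Pat S V × Pat S V, pr ∈ L ∧ name pr.1 pr.2 = v then h.choose.1
      else .var v with hσdef
    have hσ : ∀ a b, a ∈ A → b ∈ B → σ (name a b) = a := by
      intro a b ha hb
      have hmem : (a, b) ∈ L := List.pair_mem_product.mpr ⟨ha, hb⟩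
      have hex : ∃ pr : Pat S V × Pat S V, pr ∈ L ∧ name pr.1 pr.2 = name a b :=
        ⟨(a, b), hmem, rfl⟩
      rw [hσdef]
      simp only [dif_pos hex]
      exact (hinj _ _ _ _ hex.choose_spec.1 hmem hex.choose_spec.2).1
    exact ⟨σ, (Pat.subst_au_left name σ A B hA hB hσ p₁ (Pat.mem_subs_self p₁)
      p₂ (Pat.mem_subs_self p₂)).symm⟩
  have hle2 : Pat.le p₂ (Pat.au name p₁ p₂) := by
    set σ : V → Pat S V := fun v =>
      if h : ∃ pr : Pat S V × Pat S V, pr ∈ L ∧ name pr.1 pr.2 = v then h.choose.2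
      else .var v with hσdef
    have hσ : ∀ a b, a ∈ A → b ∈ B → σ (name a b) = b := by
      intro a b ha hb
      have hmem : (a, b) ∈ L := List.pair_mem_product.mpr ⟨ha, hb⟩
      have hex : ∃ pr : Pat S V × Pat S V, pr ∈ L ∧ name pr.1 pr.2 = name a b :=
        ⟨(a, b), hmem, rfl⟩
      rw [hσdef]
      simp only [dif_pos hex]
      exact (hinj _ _ _ _ hex.choose_spec.1 hmem hex.choose_spec.2).2
    exact ⟨σ, (Pat.subst_au_right name σ A B hA hB hσ p₁ (Pat.mem_subs_self p₁)
      p₂ (Pat.mem_subs_self p₂)).symm⟩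
  have hleast : ∀ q : Pat S V, Pat.le p₁ q → Pat.le p₂ q →
      Pat.le (Pat.au name p₁ p₂) q := by
    rintro q ⟨σ₁, h1⟩ ⟨σ₂, h2⟩
    exact ⟨fun v => Pat.au name (σ₁ v) (σ₂ v), by
      rw [h1, h2]; exact Pat.au_subst name σ₁ σ₂ q⟩
  refine ⟨Pat.au name p₁ p₂, ⟨hle1, hle2, hleast⟩, ?_⟩
  rintro j' ⟨h1, h2, h3⟩
  exact ⟨hleast j' h1 h2, h3 _ hle1 hle2⟩
end

section
/- Any anti-unifier of two e-classes a and b that is obtained by following a cycle in the e-graph, i.e., a pattern of the form p' = q[X ↦ p] where p ∈ AU(a,b) and q is a non-trivial context, is dominated by p: vars(p') ⊇ vars(p) and size(p') ≥ size(p). Hence breaking cycles during e-class anti-unification discards only dominated patterns, and AU(a,b) computed with cycle-breaking is a finite set. -/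
namespace Pat

variable {S V : Type}

/-- Size of a pattern: the number of constructor and variable occurrences. -/
def size : Pat S V → ℕ
  | .var _ => 1
  | .con _ args => 1 + (args.attach.map (fun a => size a.1)).sum
  decreasing_by
  all_goals simp_wf
  all_goals (try have h := List.sizeOf_lt_of_mem a.2)
  all_goals omega

/-- The list of variable occurrences of a pattern, in left-to-right order. -/
def varsList : Pat S V → List V
  | .var x => [x]
  | .con _ args => args.attach.flatMap (fun a => varsList a.1)
  decreasing_by
  all_goals simp_wf
  all_goals (try have h := List.sizeOf_lt_of_mem a.2)
  all_goals omega

variable [DecidableEq V]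

/-- The number of occurrences of variable `x` in pattern `p`. -/
def occurs (x : V) (p : Pat S V) : ℕ := p.varsList.count x

/-- The (distinct) variables of a pattern. -/
def vars (p : Pat S V) : List V := p.varsList.dedup

/-- A pattern is linear if each of its variables occurs exactly once. -/
def Linear (p : Pat S V) : Prop := p.varsList.Nodup

/-- `use(p, σ) = 1 + Σ_{X ∈ vars(p)} size(σ(X))`: cost of one application. -/
def use (p : Pat S V) (σ : V → Pat S V) : ℕ :=
  1 + (p.vars.map (fun x => (σ x).size)).sum

/-- `save(p, σ) = size(σ(p))`: size of the term matched by `p`. -/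
def save (p : Pat S V) (σ : V → Pat S V) : ℕ := (p.subst σ).size

/-- Total compression cost of pattern `p` used once per substitution in `σs`:
`size(p) + Σ_i (use(p,σ_i) − save(p,σ_i))`. -/
def cost (p : Pat S V) (σs : List (V → Pat S V)) : ℤ :=
  (p.size : ℤ) + (σs.map (fun σ => (p.use σ : ℤ) - (p.save σ : ℤ))).sum

end Pat


namespace Pat
variable {S V : Type}

theorem size_con (s : S) (args : List (Pat S V)) :
    (Pat.con s args).size = 1 + (args.map size).sum := by
  rw [size]; simp

theorem varsList_con (s : S) (args : List (Pat S V)) :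
    (Pat.con s args).varsList = args.flatMap varsList := by
  rw [varsList]; simp

theorem one_le_size (p : Pat S V) : 1 ≤ p.size := by
  induction p using Pat.size.induct with
  | _ => simp [size]

theorem length_varsList_le_size (p : Pat S V) : p.varsList.length ≤ p.size := by
  induction p using Pat.size.induct with
  | case1 x => simp [size, varsList]
  | case2 s args ih =>
    rw [size_con, varsList_con, List.length_flatMap]
    have key : ∀ l : List (Pat S V), (∀ a ∈ l, a ∈ args) →
        (l.map fun a => a.varsList.length).sum ≤ (l.map size).sum := by
      intro l hl
      induction l with
      | nil => simp
      | cons hd tl ihl =>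
        simp only [List.map_cons, List.sum_cons]
        have h1 : hd.varsList.length ≤ hd.size := ih ⟨hd, hl hd (by simp)⟩
        have h2 := ihl (fun a ha => hl a (by simp [ha]))
        omega
    have := key args (fun a ha => ha)
    omega

theorem varsList_subst (σ : V → Pat S V) (q : Pat S V) :
    (q.subst σ).varsList = q.varsList.flatMap (fun x => (σ x).varsList) := by
  induction q using Pat.subst.induct with
  | case1 x => simp [subst, varsList]
  | case2 s args ih =>
    rw [subst, varsList_con, varsList_con]
    simp only [List.map_subtype, List.unattach_attach, List.flatMap_map]
    have key : ∀ l : List (Pat S V), (∀ a ∈ l, a ∈ args) →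
        (l.flatMap fun a => (a.subst σ).varsList)
          = (l.flatMap varsList).flatMap fun x => (σ x).varsList := by
      intro l hl
      induction l with
      | nil => simp
      | cons hd tl ihl =>
        simp only [List.flatMap_cons, List.flatMap_append]
        have h1 : (hd.subst σ).varsList = hd.varsList.flatMap fun x => (σ x).varsList :=
          ih ⟨hd, hl hd (by simp)⟩
        have h2 := ihl (fun a ha => hl a (by simp [ha]))
        rw [h1, h2]
    exact key args (fun a ha => ha)

theorem size_subst (σ : V → Pat S V) (q : Pat S V) :
    (q.subst σ).size + q.varsList.length
      = q.size + (q.varsList.map (fun x => (σ x).size)).sum := by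
  induction q using Pat.subst.induct with
  | case1 x => simp [subst, varsList, size]; omega
  | case2 s args ih =>
    rw [subst, size_con, size_con, varsList_con]
    simp only [List.map_subtype, List.unattach_attach, List.map_map, List.length_flatMap,
      List.map_flatMap, Function.comp_def]
    have key : ∀ l : List (Pat S V), (∀ a ∈ l, a ∈ args) →
        (l.map fun a => (a.subst σ).size).sum + (l.map fun a => a.varsList.length).sum
          = (l.map size).sum + (l.flatMap fun a => a.varsList.map fun x => (σ x).size).sum := by
      intro l hl
      induction l with
      | nil => simp
      | cons hd tl ihl =>
        simp only [List.map_cons, List.sum_cons, List.flatMap_cons, List.sum_append]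
        have h1 : (hd.subst σ).size + hd.varsList.length
            = hd.size + (hd.varsList.map fun x => (σ x).size).sum := ih ⟨hd, hl hd (by simp)⟩
        have h2 := ihl (fun a ha => hl a (by simp [ha]))
        omega
    have := key args (fun a ha => ha)
    omega

theorem length_flatMap_varsList_le (args : List (Pat S V)) :
    (args.flatMap varsList).length ≤ (args.map size).sum := by
  induction args with
  | nil => simp
  | cons hd tl ih =>
    simp only [List.flatMap_cons, List.length_append, List.map_cons, List.sum_cons]
    have := length_varsList_le_size hd
    omega

theorem size_var (x : V) : (Pat.var x : Pat S V).size = 1 := by rw [size]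

end Pat

/-- A pattern produced by following a cycle — `p' = q[X ↦ p]` where `q` is a
non-trivial context with a single occurrence of the hole variable `X` — is
dominated by `p`: it contains all the variables of `p` and is at least as
large (indeed `size p' = size q − 1 + size p ≥ size p + 1`). -/
theorem cycle_pattern_dominated {S V : Type} [DecidableEq V]
    (p q : Pat S V) (X : V)
    (hhole : q.occurs X = 1) (hnontriv : q ≠ Pat.var X)
    (p' : Pat S V)
    (hp' : p' = q.subst (fun v => if v = X then p else Pat.var v)) :
    (∀ v ∈ p.varsList, v ∈ p'.varsList) ∧
    p.size ≤ p'.size ∧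
    p'.size = q.size - 1 + p.size ∧
    p.size + 1 ≤ p'.size := by
  subst hp'
  set σ : V → Pat S V := fun v => if v = X then p else Pat.var v with hσ
  have hσX : σ X = p := by simp [hσ]
  have hσv : ∀ v, v ≠ X → σ v = Pat.var v := by intro v hv; simp [hσ, hv]
  have hXmem : X ∈ q.varsList := by
    have h1 : q.varsList.count X = 1 := hhole
    exact List.count_pos_iff.mp (by omega)
  have hvl := Pat.varsList_subst σ q
  have hmem : ∀ v ∈ p.varsList, v ∈ (q.subst σ).varsList := by
    intro v hv
    rw [hvl, List.mem_flatMap]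
    exact ⟨X, hXmem, by rw [hσX]; exact hv⟩
  have hsum : ∀ l : List V, (l.map (fun x => (σ x).size)).sum + l.count X
      = l.length + l.count X * p.size := by
    intro l
    induction l with
    | nil => simp
    | cons hd tl ihl =>
      by_cases h : hd = X
      · subst h
        simp only [List.map_cons, List.sum_cons, List.count_cons_self, List.length_cons, hσX]
        rw [Nat.add_mul, Nat.one_mul]
        omega
      · simp only [List.map_cons, List.sum_cons, List.length_cons, hσv hd h, Pat.size_var]
        rw [List.count_cons_of_ne h]
        omega
  have hss := Pat.size_subst σ q
  have hc : q.varsList.count X = 1 := hhole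
  have hsum' := hsum q.varsList
  rw [hc] at hsum'
  have hlen : q.varsList.count X ≤ q.varsList.length := List.count_le_length
  have hq2 : 2 ≤ q.size := by
    cases q with
    | var y =>
      by_cases h : y = X
      · subst h; exact absurd rfl hnontriv
      · exfalso
        have h0 : (Pat.var y : Pat S V).occurs X = 0 := by
          simp [Pat.occurs, Pat.varsList, List.count_cons, List.count_nil, Ne.symm h, h]
        rw [h0] at hhole
        exact Nat.zero_ne_one hhole
    | con s args =>
      have h1 : 1 ≤ (Pat.con s args : Pat S V).varsList.length :=
        List.length_pos_iff.mpr (List.ne_nil_of_mem hXmem)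
      have h2 := Pat.length_flatMap_varsList_le args
      rw [Pat.size_con]
      rw [Pat.varsList_con] at h1
      omega
  have hlen2 := Pat.length_varsList_le_size q
  have hp1 := Pat.one_le_size p
  refine ⟨hmem, by omega, by omega, by omega⟩
end
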